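/- arXiv:2411.08204 — 3 statements merged into one kernel-verified Lean document; each statement's English description precedes it below -/
import Mathlib

section
/- Let G be a connected graph with shortest-path metric d_G, let v be any vertex, and let c₁,…,c_K be vertices in a square S of side length ℓ with pairwise graph distances greater than ℓ/2. For each i, let σ_i be the terminal portion of a shortest path from v to c_i consisting of the points within graph distance ℓ/4 of c_i. Then the curves σ_i are pairwise disjoint, each σ_i lies within the square 2S (S scaled by factor 2 about its centre), and at most one σ_i has length less than ℓ/4. Consequently the total length of edges of G intersecting 2S is at least (K−1)·ℓ/4. -/
open Metric Set MeasureTheory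

noncomputable section

abbrev Pt := EuclideanSpace ℝ (Fin 2)

lemma coord_le_dist (p q : Pt) (k : Fin 2) : |p k - q k| ≤ dist p q := by
  rw [EuclideanSpace.dist_eq, ← Real.dist_eq]
  have h : dist (p k) (q k) = Real.sqrt (dist (p k) (q k) ^ 2) := by
    rw [Real.sqrt_sq dist_nonneg]
  rw [h]
  exact Real.sqrt_le_sqrt (Finset.single_le_sum
    (f := fun i => dist (p i) (q i) ^ 2) (fun i _ => sq_nonneg _) (Finset.mem_univ k))

/-- Axis-parallel square of side length `ℓ` centred at `c`. -/
def Square (c : Pt) (ℓ : ℝ) : Set Pt := {p : Pt | ∀ i, |p i - c i| ≤ ℓ / 2}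

/-- Disjoint shortest-path pieces near well-spaced centres.
`X` is the embedded graph viewed as a metric space (its points are the vertices and the
points in the interiors of the edges), with shortest-path metric `dist`, length measure
`μ`, and embedding `φ : X → ℝ²` which does not increase distances.  The centres
`c 0, …, c (K-1)` lie in the square `S` of side `ℓ` centred at `c₀` and have pairwise
graph distance `> ℓ/2`.  For each `i`, `σ i` is the terminal portion of a shortest path
from `v` to `c i` consisting of the points within graph distance `ℓ/4` of `c i`; in
particular every point `x ∈ σ i` satisfies `dist v x + dist x (c i) = dist v (c i)`,
and `σ i` has length `ℓ/4` whenever `dist v (c i) ≥ ℓ/4`.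
Then: the `σ i` are pairwise disjoint, each `σ i` lies (via `φ`) in the square `2S`,
at most one `σ i` has length less than `ℓ/4`, and consequently the total length of the
portion of the graph inside `2S` is at least `(K-1)·ℓ/4`. -/
theorem stmt7 {X : Type*} [PseudoMetricSpace X] [MeasurableSpace X]
    (μ : Measure X) (φ : X → Pt)
    (hφ : ∀ x y : X, dist (φ x) (φ y) ≤ dist x y)
    (v : X) (c₀ : Pt) (ℓ : ℝ) (hℓ : 0 < ℓ)
    (K : ℕ) (c : Fin K → X)
    (hcS : ∀ i, φ (c i) ∈ Square c₀ ℓ)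
    (hsep : ∀ i j : Fin K, i ≠ j → ℓ / 2 < dist (c i) (c j))
    (σ : Fin K → Set X)
    (hσmeas : ∀ i, MeasurableSet (σ i))
    (hσnear : ∀ i, ∀ x ∈ σ i, dist x (c i) ≤ ℓ / 4)
    (hσpath : ∀ i, ∀ x ∈ σ i, dist v x + dist x (c i) = dist v (c i))
    (hσlen : ∀ i, ℓ / 4 ≤ dist v (c i) → μ (σ i) = ENNReal.ofReal (ℓ / 4))
    :
    (∀ i j : Fin K, i ≠ j → Disjoint (σ i) (σ j)) ∧
    (∀ i, ∀ x ∈ σ i, φ x ∈ Square c₀ (2 * ℓ)) ∧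
    {i : Fin K | μ (σ i) < ENNReal.ofReal (ℓ / 4)}.Subsingleton ∧
    ENNReal.ofReal ((K - 1 : ℝ) * ℓ / 4) ≤ μ {x : X | φ x ∈ Square c₀ (2 * ℓ)} := by
  classical
  have hdisj : ∀ i j : Fin K, i ≠ j → Disjoint (σ i) (σ j) := by
    intro i j hij
    rw [Set.disjoint_left]
    intro x hxi hxj
    have hs := hsep i j hij
    have : dist (c i) (c j) ≤ ℓ / 2 := by
      calc dist (c i) (c j) ≤ dist (c i) x + dist x (c j) := dist_triangle _ _ _
        _ = dist x (c i) + dist x (c j) := by rw [dist_comm]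
        _ ≤ ℓ / 4 + ℓ / 4 := add_le_add (hσnear i x hxi) (hσnear j x hxj)
        _ = ℓ / 2 := by ring
    linarith
  have hsq : ∀ i, ∀ x ∈ σ i, φ x ∈ Square c₀ (2 * ℓ) := by
    intro i x hx k
    have h1 : |φ x k - φ (c i) k| ≤ ℓ / 4 :=
      (coord_le_dist _ _ k).trans ((hφ _ _).trans (hσnear i x hx))
    have h2 : |φ (c i) k - c₀ k| ≤ ℓ / 2 := hcS i k
    have h3 : |φ x k - c₀ k| ≤ |φ x k - φ (c i) k| + |φ (c i) k - c₀ k| := by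
      have := abs_sub_abs_le_abs_sub (φ x k - c₀ k) (φ x k - φ (c i) k)
      calc |φ x k - c₀ k| = |(φ x k - φ (c i) k) + (φ (c i) k - c₀ k)| := by ring_nf
        _ ≤ _ := abs_add_le _ _
    have : |φ x k - c₀ k| ≤ 2 * ℓ / 2 := by linarith
    exact this
  have hsmall : {i : Fin K | μ (σ i) < ENNReal.ofReal (ℓ / 4)}.Subsingleton := by
    intro i hi j hj
    simp only [Set.mem_setOf_eq] at hi hj
    by_contra hij
    have hvi : dist v (c i) < ℓ / 4 := by
      by_contra h
      push_neg at h
      rw [hσlen i h] at hi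
      exact lt_irrefl _ hi
    have hvj : dist v (c j) < ℓ / 4 := by
      by_contra h
      push_neg at h
      rw [hσlen j h] at hj
      exact lt_irrefl _ hj
    have hs := hsep i j hij
    have : dist (c i) (c j) ≤ dist (c i) v + dist v (c j) := dist_triangle _ _ _
    rw [dist_comm (c i) v] at this
    linarith
  refine ⟨hdisj, hsq, hsmall, ?_⟩
  -- total length bound
  set T := {x : X | φ x ∈ Square c₀ (2 * ℓ)} with hT
  have hsub : (⋃ i, σ i) ⊆ T := by
    intro x hx
    obtain ⟨i, hi⟩ := Set.mem_iUnion.mp hx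
    exact hsq i x hi
  have hU : μ (⋃ i, σ i) = ∑ i, μ (σ i) := by
    rw [measure_iUnion (fun i j h => hdisj i j h) hσmeas, tsum_fintype]
  set B : Finset (Fin K) := Finset.univ.filter (fun i => μ (σ i) < ENNReal.ofReal (ℓ / 4))
    with hB
  have hBcard : B.card ≤ 1 := by
    refine Finset.card_le_one.mpr ?_
    intro a ha b hb
    exact hsmall (Finset.mem_filter.mp ha).2 (Finset.mem_filter.mp hb).2
  have hgood : ∀ i ∈ Bᶜ, ENNReal.ofReal (ℓ / 4) ≤ μ (σ i) := by
    intro i hi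
    by_contra h
    push_neg at h
    exact (Finset.mem_compl.mp hi) (Finset.mem_filter.mpr ⟨Finset.mem_univ i, h⟩)
  have h1 : (Bᶜ.card : ENNReal) * ENNReal.ofReal (ℓ / 4) ≤ ∑ i, μ (σ i) := by
    calc (Bᶜ.card : ENNReal) * ENNReal.ofReal (ℓ / 4)
        = ∑ _i ∈ Bᶜ, ENNReal.ofReal (ℓ / 4) := by rw [Finset.sum_const, nsmul_eq_mul]
      _ ≤ ∑ i ∈ Bᶜ, μ (σ i) := Finset.sum_le_sum hgood
      _ ≤ ∑ i, μ (σ i) :=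
          Finset.sum_le_sum_of_subset_of_nonneg (Finset.subset_univ _) (fun _ _ _ => zero_le)
  have hcardc : K - 1 ≤ Bᶜ.card := by
    have hc := Finset.card_compl B
    have hK : Fintype.card (Fin K) = K := Fintype.card_fin K
    omega
  have h2 : ENNReal.ofReal ((K - 1 : ℝ) * ℓ / 4) ≤ (Bᶜ.card : ENNReal) * ENNReal.ofReal (ℓ / 4) := by
    have hcast : (K : ℝ) - 1 ≤ (Bᶜ.card : ℝ) := by
      have h3 : ((K - 1 : ℕ) : ℝ) ≤ (Bᶜ.card : ℝ) := Nat.cast_le.mpr hcardc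
      have h4 : (K : ℝ) - 1 ≤ ((K - 1 : ℕ) : ℝ) := by
        rcases Nat.eq_zero_or_pos K with h0 | h0
        · simp [h0]
        · rw [Nat.cast_sub h0]; simp
      linarith
    have hr : (K - 1 : ℝ) * ℓ / 4 ≤ (Bᶜ.card : ℝ) * (ℓ / 4) := by nlinarith [hℓ.le]
    calc ENNReal.ofReal ((K - 1 : ℝ) * ℓ / 4)
        ≤ ENNReal.ofReal ((Bᶜ.card : ℝ) * (ℓ / 4)) := ENNReal.ofReal_le_ofReal hr
      _ = (Bᶜ.card : ENNReal) * ENNReal.ofReal (ℓ / 4) := by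
          rw [ENNReal.ofReal_mul (by positivity), ENNReal.ofReal_natCast]
  refine h2.trans (h1.trans ?_)
  rw [← hU]
  exact measure_mono hsub
end
end

section
/- In a λ-low-density graph with n vertices, the number of edges whose intersection with a square S of side length ℓ has length in the range [ℓ/2^j, 2ℓ/2^j] (for an integer j ≥ 0) and which have both endpoints in 3S is at most 2^{2j+2}·λ, and hence the total length of the intersections with S of such edges is at most 2^{j+3}·λ·ℓ. -/
open Metric Set
open scoped Classical

noncomputable section

/-- The straight-line embedding of an edge. -/
def seg (e : Pt × Pt) : Set Pt := segment ℝ e.1 e.2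

/-- A graph, given by its edge set embedded with straight-line edges, is
`λ`-low-density if for every radius `r > 0` and every ball of radius `r`,
at most `λ` edges of length at least `r` intersect the ball. -/
def LowDensity (lam : ℕ) (E : Finset (Pt × Pt)) : Prop :=
  ∀ r : ℝ, 0 < r → ∀ c : Pt,
    {e : Pt × Pt | e ∈ E ∧ r ≤ dist e.1 e.2 ∧ (seg e ∩ closedBall c r).Nonempty}.ncard ≤ lam

lemma dist_le_of_mem_seg {E : Type*} [NormedAddCommGroup E] [NormedSpace ℝ E]
    {a b x y : E} (hx : x ∈ segment ℝ a b) (hy : y ∈ segment ℝ a b) :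
    dist x y ≤ dist a b := by
  rw [segment_eq_image'] at hx hy
  obtain ⟨s, hs, rfl⟩ := hx
  obtain ⟨t, ht, rfl⟩ := hy
  rw [dist_eq_norm, add_sub_add_left_eq_sub, ← sub_smul, dist_eq_norm', norm_smul]
  calc |s - t| * ‖b - a‖ ≤ 1 * ‖b - a‖ := by
        apply mul_le_mul_of_nonneg_right _ (norm_nonneg _)
        rw [abs_le]
        constructor <;> simp at hs ht <;> linarith [hs.1, hs.2, ht.1, ht.2]
    _ = ‖b - a‖ := one_mul _

lemma clip_bound {t d : ℝ} (hd : 0 < d) (N : ℕ) (hN : 0 < N)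
    (ht0 : 0 ≤ t) (ht1 : t ≤ N * d) :
    |t - (min (⌊t / d⌋.toNat) (N - 1) : ℕ) * d| ≤ d := by
  set m := ⌊t / d⌋ with hm
  have hm0 : 0 ≤ m := Int.floor_nonneg.2 (by positivity)
  rcases le_or_gt m.toNat (N - 1) with h | h
  · rw [min_eq_left h]
    have hmm : ((m.toNat : ℕ) : ℝ) = (m : ℝ) := by exact_mod_cast Int.toNat_of_nonneg hm0
    have h1 : (m.toNat : ℝ) * d ≤ t := by
      have := Int.floor_le (t / d)
      rw [hmm]
      calc (m : ℝ) * d ≤ t / d * d := by nlinarith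
        _ = t := div_mul_cancel₀ t hd.ne'
    have h2 : t ≤ ((m.toNat : ℝ) + 1) * d := by
      have := (Int.lt_floor_add_one (t / d)).le
      rw [hmm]
      calc t = t / d * d := (div_mul_cancel₀ t hd.ne').symm
        _ ≤ ((m : ℝ) + 1) * d := by nlinarith
    rw [abs_le]; constructor <;> nlinarith
  · rw [min_eq_right h.le]
    have hNm : (N : ℤ) ≤ m := by omega
    have h1 : (N : ℝ) * d ≤ t := by
      calc (N : ℝ) * d ≤ (m : ℝ) * d := by
            apply mul_le_mul_of_nonneg_right _ hd.le; exact_mod_cast hNm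
        _ ≤ t / d * d := by nlinarith [Int.floor_le (t/d)]
        _ = t := div_mul_cancel₀ t hd.ne'
    have hcast : ((N - 1 : ℕ) : ℝ) = (N : ℝ) - 1 := by
      have h1 : (1:ℕ) ≤ N := hN
      push_cast [Nat.cast_sub h1]; ring
    rw [hcast, abs_le]; constructor <;> nlinarith

set_option maxHeartbeats 1000000 in
/-- Dyadic class bound: in a `λ`-low-density graph with straight-line embedding, the
edges with both endpoints in `3S` whose intersection with the square `S` (of side `ℓ`)
has length in `[ℓ/2^j, 2ℓ/2^j]` number at most `2^(2j+2)·λ`, and the total length of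
their intersections with `S` is at most `2^(j+3)·λ·ℓ`. -/
theorem stmt12 (lam : ℕ) (E : Finset (Pt × Pt)) (hld : LowDensity lam E)
    (c : Pt) (ℓ : ℝ) (hℓ : 0 < ℓ) (j : ℕ) :
    (E.filter (fun e => e.1 ∈ Square c (3 * ℓ) ∧ e.2 ∈ Square c (3 * ℓ) ∧
        ℓ / 2 ^ j ≤ Metric.diam (seg e ∩ Square c ℓ) ∧
        Metric.diam (seg e ∩ Square c ℓ) ≤ 2 * ℓ / 2 ^ j)).card ≤ 2 ^ (2 * j + 2) * lam ∧
    ∑ e ∈ E.filter (fun e => e.1 ∈ Square c (3 * ℓ) ∧ e.2 ∈ Square c (3 * ℓ) ∧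
        ℓ / 2 ^ j ≤ Metric.diam (seg e ∩ Square c ℓ) ∧
        Metric.diam (seg e ∩ Square c ℓ) ≤ 2 * ℓ / 2 ^ j),
      Metric.diam (seg e ∩ Square c ℓ) ≤ 2 ^ (j + 3) * lam * ℓ := by
  set P : Pt × Pt → Prop := fun e => e.1 ∈ Square c (3 * ℓ) ∧ e.2 ∈ Square c (3 * ℓ) ∧
        ℓ / 2 ^ j ≤ Metric.diam (seg e ∩ Square c ℓ) ∧
        Metric.diam (seg e ∩ Square c ℓ) ≤ 2 * ℓ / 2 ^ j with hP
  set F := E.filter (fun e => P e) with hF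
  set N : ℕ := 2 ^ (j + 1) with hN
  have hNpos : 0 < N := Nat.pow_pos (by norm_num)
  set d : ℝ := ℓ / N with hd
  have hdpos : 0 < d := by positivity
  set r : ℝ := ℓ / 2 ^ j with hr
  have hrpos : 0 < r := by positivity
  have h2d : 2 * d = r := by
    rw [hd, hr, hN]
    push_cast
    rw [pow_succ]
    field_simp
  -- grid
  set g : (Fin 2 → Fin N) → Pt := fun k => (WithLp.equiv 2 (Fin 2 → ℝ)).symm
    (fun i => c i - ℓ / 2 + (k i : ℕ) * d) with hg
  set idx : Pt → (Fin 2 → Fin N) := fun p i =>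
    ⟨min (⌊(p i - (c i - ℓ / 2)) / d⌋.toNat) (N - 1), by omega⟩ with hidx
  have key : ∀ p ∈ Square c ℓ, dist p (g (idx p)) ≤ r := by
    intro p hp
    have hcoord : ∀ i : Fin 2, dist (p i) (g (idx p) i) ≤ d := by
      intro i
      have hgi : g (idx p) i = c i - ℓ / 2 + (min (⌊(p i - (c i - ℓ / 2)) / d⌋.toNat) (N - 1) : ℕ) * d := by
        simp only [hg, hidx]; rfl
      have hpi := hp i
      have ht0 : 0 ≤ p i - (c i - ℓ / 2) := by
        rw [abs_le] at hpi; linarith [hpi.1]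
      have ht1 : p i - (c i - ℓ / 2) ≤ N * d := by
        rw [abs_le] at hpi
        have : (N : ℝ) * d = ℓ := by
          rw [hd]; field_simp
        linarith [hpi.2]
      have := clip_bound hdpos N hNpos ht0 ht1
      rw [hgi, Real.dist_eq]
      calc |p i - (c i - ℓ / 2 + (min (⌊(p i - (c i - ℓ / 2)) / d⌋.toNat) (N - 1) : ℕ) * d)|
          = |p i - (c i - ℓ / 2) - (min (⌊(p i - (c i - ℓ / 2)) / d⌋.toNat) (N - 1) : ℕ) * d| := by
            ring_nf
        _ ≤ d := this
    rw [EuclideanSpace.dist_eq]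
    have hsum : (∑ i, dist (p i) (g (idx p) i) ^ 2) ≤ (2 * d) ^ 2 := by
      have : ∀ i : Fin 2, dist (p i) (g (idx p) i) ^ 2 ≤ d ^ 2 := by
        intro i
        exact pow_le_pow_left₀ dist_nonneg (hcoord i) 2
      calc (∑ i, dist (p i) (g (idx p) i) ^ 2) ≤ ∑ _i : Fin 2, d ^ 2 :=
            Finset.sum_le_sum (fun i _ => this i)
        _ = 2 * d ^ 2 := by simp only [Finset.sum_const, Finset.card_univ,
              Fintype.card_fin, nsmul_eq_mul]; push_cast; ring
        _ ≤ (2 * d) ^ 2 := by nlinarith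
    calc Real.sqrt (∑ i, dist (p i) (g (idx p) i) ^ 2) ≤ Real.sqrt ((2 * d) ^ 2) :=
          Real.sqrt_le_sqrt hsum
      _ = 2 * d := Real.sqrt_sq (by positivity)
      _ = r := h2d
  -- properties of edges in F
  have hne : ∀ e ∈ F, (seg e ∩ Square c ℓ).Nonempty := by
    intro e he
    rcases Set.eq_empty_or_nonempty (seg e ∩ Square c ℓ) with h | h
    · exfalso
      have := (Finset.mem_filter.1 he).2.2.2.1
      rw [h, Metric.diam_empty] at this
      linarith
    · exact h
  set f : Pt × Pt → (Fin 2 → Fin N) := fun e =>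
    if h : (seg e ∩ Square c ℓ).Nonempty then idx h.choose else fun _ => ⟨0, hNpos⟩ with hf
  have hlen : ∀ e ∈ F, r ≤ dist e.1 e.2 := by
    intro e he
    have h1 := (Finset.mem_filter.1 he).2.2.2.1
    have h2 : Metric.diam (seg e ∩ Square c ℓ) ≤ dist e.1 e.2 :=
      Metric.diam_le_of_forall_dist_le dist_nonneg fun x hx y hy =>
        dist_le_of_mem_seg hx.1 hy.1
    linarith
  -- fiber bound
  have hfiber : ∀ k : Fin 2 → Fin N, (F.filter (fun e => f e = k)).card ≤ lam := by
    intro k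
    have hsub : ↑(F.filter (fun e => f e = k)) ⊆
        {e : Pt × Pt | e ∈ E ∧ r ≤ dist e.1 e.2 ∧ (seg e ∩ closedBall (g k) r).Nonempty} := by
      intro e he
      simp only [Finset.coe_filter, Set.mem_setOf_eq] at he
      obtain ⟨heF, hek⟩ := he
      have heE : e ∈ E := (Finset.mem_filter.1 heF).1
      refine ⟨heE, hlen e heF, ?_⟩
      have hne' := hne e heF
      have hp := hne'.choose_spec
      refine ⟨hne'.choose, hp.1, ?_⟩
      rw [Metric.mem_closedBall]
      have hfe : f e = idx hne'.choose := by rw [hf]; simp [hne']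
      have hkey := key hne'.choose hp.2
      rw [← hfe, hek] at hkey
      exact hkey
    calc (F.filter (fun e => f e = k)).card
        = (↑(F.filter (fun e => f e = k)) : Set (Pt × Pt)).ncard := (Set.ncard_coe_finset _).symm
      _ ≤ _ := Set.ncard_le_ncard hsub (Set.Finite.subset E.finite_toSet (fun e he => he.1))
      _ ≤ lam := hld r hrpos (g k)
  -- card bound
  have hcardK : Fintype.card (Fin 2 → Fin N) = 2 ^ (2 * j + 2) := by
    rw [Fintype.card_fun, Fintype.card_fin, Fintype.card_fin, hN, ← pow_mul]
    congr 1
    ring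
  have hcard : F.card ≤ 2 ^ (2 * j + 2) * lam := by
    rw [Finset.card_eq_sum_card_fiberwise (f := f) (t := Finset.univ)
      (fun e _ => Finset.mem_univ _)]
    calc (∑ k ∈ Finset.univ, (F.filter (fun e => f e = k)).card)
        ≤ ∑ _k ∈ (Finset.univ : Finset (Fin 2 → Fin N)), lam :=
          Finset.sum_le_sum (fun k _ => hfiber k)
      _ = Fintype.card (Fin 2 → Fin N) * lam := by
          rw [Finset.sum_const, Finset.card_univ, smul_eq_mul]
      _ = 2 ^ (2 * j + 2) * lam := by rw [hcardK]
  refine ⟨hcard, ?_⟩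
  have hsum : (∑ e ∈ F, Metric.diam (seg e ∩ Square c ℓ)) ≤ F.card * (2 * ℓ / 2 ^ j) := by
    rw [← nsmul_eq_mul]
    exact Finset.sum_le_card_nsmul _ _ _ (fun e he => (Finset.mem_filter.1 he).2.2.2.2)
  calc (∑ e ∈ F, Metric.diam (seg e ∩ Square c ℓ)) ≤ F.card * (2 * ℓ / 2 ^ j) := hsum
    _ ≤ (2 ^ (2 * j + 2) * lam : ℕ) * (2 * ℓ / 2 ^ j) := by
        apply mul_le_mul_of_nonneg_right _ (by positivity)
        exact_mod_cast hcard
    _ = ((2:ℝ) ^ (2 * j + 2) * 2 / 2 ^ j) * lam * ℓ := by push_cast; ring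
    _ = 2 ^ (j + 3) * lam * ℓ := by
        congr 2
        rw [div_eq_iff (by positivity : ((2:ℝ)^j) ≠ 0), ← pow_succ, ← pow_add]
        congr 1
        omega
end
end

section
/- Side-length sandwich for congruent maximal pairs: let A' and B' be congruent axis-aligned quadtree squares of side length ℓ with point sets A ⊆ A' and B ⊆ B', such that (A', B') is (1/ε)-well-separated but (double(A'), double(B')) is not (1/ε)-well-separated, where double(X) is the quadtree square containing X of side 2ℓ, and 0 < ε < 1. Then ℓ lies in the range [c₁·ε·d₂(A,B), c₂·ε·d₂(A,B)] for constants c₁ = 1/(6√2) and c₂ = 1/√2. -/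
open Metric Set

noncomputable section

/-- Euclidean distance between two sets. -/
def dist2 (A B : Set Pt) : ℝ :=
  sInf {r : ℝ | ∃ a ∈ A, ∃ b ∈ B, r = dist a b}


lemma square_nonempty (c : Pt) {ℓ : ℝ} (h : 0 ≤ ℓ) : (Square c ℓ).Nonempty :=
  ⟨c, fun i => by simp; linarith⟩

lemma dist_apply (p q : Pt) : dist p q = Real.sqrt ((p 0 - q 0)^2 + (p 1 - q 1)^2) := by
  rw [EuclideanSpace.dist_eq, Fin.sum_univ_two]
  norm_num [Real.dist_eq]

lemma dist_le_of_mem {c : Pt} {ℓ : ℝ} (h : 0 ≤ ℓ) {p q : Pt}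
    (hp : p ∈ Square c ℓ) (hq : q ∈ Square c ℓ) : dist p q ≤ Real.sqrt 2 * ℓ := by
  rw [dist_apply]
  have h0 : |p 0 - q 0| ≤ ℓ := by
    have := hp 0; have := hq 0
    rw [abs_le] at *; constructor <;> linarith
  have h1 : |p 1 - q 1| ≤ ℓ := by
    have := hp 1; have := hq 1
    rw [abs_le] at *; constructor <;> linarith
  have : (p 0 - q 0)^2 + (p 1 - q 1)^2 ≤ 2 * ℓ^2 := by
    have a0 : (p 0 - q 0)^2 ≤ ℓ^2 := sq_le_sq' (by linarith [abs_le.mp h0]) (abs_le.mp h0).2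
    have a1 : (p 1 - q 1)^2 ≤ ℓ^2 := sq_le_sq' (by linarith [abs_le.mp h1]) (abs_le.mp h1).2
    linarith
  calc Real.sqrt ((p 0 - q 0)^2 + (p 1 - q 1)^2) ≤ Real.sqrt (2 * ℓ^2) :=
        Real.sqrt_le_sqrt this
    _ = Real.sqrt 2 * ℓ := by
        rw [Real.sqrt_mul (by norm_num), Real.sqrt_sq h]

lemma square_bounded (c : Pt) {ℓ : ℝ} (h : 0 ≤ ℓ) :
    Bornology.IsBounded (Square c ℓ) := by
  apply (Metric.isBounded_closedBall (x := c) (r := Real.sqrt 2 * ℓ)).subset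
  intro p hp
  exact Metric.mem_closedBall.mpr (dist_le_of_mem h hp (fun i => by simp; linarith : c ∈ Square c ℓ))

lemma diam_square_le (c : Pt) {ℓ : ℝ} (h : 0 ≤ ℓ) :
    Metric.diam (Square c ℓ) ≤ Real.sqrt 2 * ℓ :=
  Metric.diam_le_of_forall_dist_le (by positivity) fun p hp q hq => dist_le_of_mem h hp hq

lemma diam_square_ge (c : Pt) {ℓ : ℝ} (h : 0 ≤ ℓ) :
    Real.sqrt 2 * ℓ ≤ Metric.diam (Square c ℓ) := by
  set p : Pt := WithLp.toLp 2 (fun i => c i + ℓ / 2) with hpdef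
  set q : Pt := WithLp.toLp 2 (fun i => c i - ℓ / 2) with hqdef
  have hp : p ∈ Square c ℓ := fun i => by
    show |p i - c i| ≤ ℓ / 2
    have : p i - c i = ℓ / 2 := by simp [hpdef]
    rw [this, abs_of_nonneg (by positivity)]
  have hq : q ∈ Square c ℓ := fun i => by
    show |q i - c i| ≤ ℓ / 2
    have : q i - c i = -(ℓ / 2) := by simp [hqdef]
    rw [this, abs_neg, abs_of_nonneg (by positivity)]
  have hd : dist p q = Real.sqrt 2 * ℓ := by
    rw [dist_apply]
    have e0 : p 0 - q 0 = ℓ := by simp [hpdef, hqdef]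
    have e1 : p 1 - q 1 = ℓ := by simp [hpdef, hqdef]
    rw [e0, e1]
    rw [show ℓ^2 + ℓ^2 = 2 * ℓ^2 by ring, Real.sqrt_mul (by norm_num), Real.sqrt_sq h]
  rw [← hd]
  exact Metric.dist_le_diam_of_mem (square_bounded c h) hp hq

lemma dist2_bdd (A B : Set Pt) : BddBelow {r : ℝ | ∃ a ∈ A, ∃ b ∈ B, r = dist a b} :=
  ⟨0, fun r ⟨a, _, b, _, hr⟩ => hr ▸ dist_nonneg⟩

lemma dist2_le_dist {A B : Set Pt} {x y : Pt} (hx : x ∈ A) (hy : y ∈ B) :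
    dist2 A B ≤ dist x y :=
  csInf_le (dist2_bdd A B) ⟨x, hx, y, hy, rfl⟩

lemma dist2_mono {A B A' B' : Set Pt} (hA : A ⊆ A') (hB : B ⊆ B')
    (hAne : A.Nonempty) (hBne : B.Nonempty) : dist2 A' B' ≤ dist2 A B := by
  apply csInf_le_csInf (dist2_bdd A' B')
  · exact ⟨_, hAne.choose, hAne.choose_spec, hBne.choose, hBne.choose_spec, rfl⟩
  · rintro r ⟨x, hx, y, hy, rfl⟩
    exact ⟨x, hA hx, y, hB hy, rfl⟩

/-- Side-length sandwich for congruent maximal pairs: if the congruent quadtree squares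
`A' = Square a ℓ` and `B' = Square b ℓ` containing the point sets `A` and `B` form a
`(1/ε)`-well-separated pair, but their doubles do not, then
`ℓ ∈ [ε·d₂(A,B)/(6√2), ε·d₂(A,B)/√2]`. -/
theorem stmt17 (ε ℓ : ℝ) (hε : 0 < ε) (hε1 : ε < 1) (hℓ : 0 < ℓ)
    (a b a₂ b₂ : Pt) (A B : Set Pt)
    (hA : A ⊆ Square a ℓ) (hB : B ⊆ Square b ℓ)
    (hAne : A.Nonempty) (hBne : B.Nonempty)
    (hda : Square a ℓ ⊆ Square a₂ (2 * ℓ)) (hdb : Square b ℓ ⊆ Square b₂ (2 * ℓ))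
    (hsep : (1 / ε) * max (Metric.diam (Square a ℓ)) (Metric.diam (Square b ℓ)) ≤
      dist2 (Square a ℓ) (Square b ℓ))
    (hnsep : ¬ ((1 / ε) * max (Metric.diam (Square a₂ (2 * ℓ)))
        (Metric.diam (Square b₂ (2 * ℓ))) ≤
      dist2 (Square a₂ (2 * ℓ)) (Square b₂ (2 * ℓ)))) :
    (1 / (6 * Real.sqrt 2)) * ε * dist2 A B ≤ ℓ ∧
    ℓ ≤ (1 / Real.sqrt 2) * ε * dist2 A B := by
  have hs2 : (0:ℝ) < Real.sqrt 2 := by positivity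
  set s := Real.sqrt 2 with hs
  have h2ℓ : (0:ℝ) ≤ 2 * ℓ := by linarith
  have dA : Metric.diam (Square a ℓ) = s * ℓ :=
    le_antisymm (diam_square_le a hℓ.le) (diam_square_ge a hℓ.le)
  have dB : Metric.diam (Square b ℓ) = s * ℓ :=
    le_antisymm (diam_square_le b hℓ.le) (diam_square_ge b hℓ.le)
  have dA2 : Metric.diam (Square a₂ (2 * ℓ)) = s * (2 * ℓ) :=
    le_antisymm (diam_square_le a₂ h2ℓ) (diam_square_ge a₂ h2ℓ)
  have dB2 : Metric.diam (Square b₂ (2 * ℓ)) = s * (2 * ℓ) :=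
    le_antisymm (diam_square_le b₂ h2ℓ) (diam_square_ge b₂ h2ℓ)
  rw [dA, dB, max_self] at hsep
  rw [dA2, dB2, max_self] at hnsep
  push_neg at hnsep
  -- upper bound on ℓ
  have h1 : (1 / ε) * (s * ℓ) ≤ dist2 A B :=
    le_trans hsep (dist2_mono hA hB hAne hBne)
  have h1' : s * ℓ ≤ ε * dist2 A B := by
    calc s * ℓ = ε * ((1 / ε) * (s * ℓ)) := by field_simp
      _ ≤ ε * dist2 A B := mul_le_mul_of_nonneg_left h1 hε.le
  -- lower bound on ℓ
  obtain ⟨x, hx⟩ := hAne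
  obtain ⟨y, hy⟩ := hBne
  have hxd : x ∈ Square a₂ (2 * ℓ) := hda (hA hx)
  have hyd : y ∈ Square b₂ (2 * ℓ) := hdb (hB hy)
  have h3 : dist x y - 4 * s * ℓ ≤ dist2 (Square a₂ (2 * ℓ)) (Square b₂ (2 * ℓ)) := by
    obtain ⟨u₀, hu₀⟩ := square_nonempty a₂ h2ℓ
    obtain ⟨v₀, hv₀⟩ := square_nonempty b₂ h2ℓ
    rw [dist2]
    refine le_csInf ⟨dist u₀ v₀, u₀, hu₀, v₀, hv₀, rfl⟩ ?_
    rintro r ⟨u, hu, v, hv, rfl⟩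
    have t1 : dist x u ≤ s * (2 * ℓ) := dist_le_of_mem h2ℓ hxd hu
    have t2 : dist v y ≤ s * (2 * ℓ) := dist_le_of_mem h2ℓ hv hyd
    have t3 : dist x y ≤ dist x u + dist u v + dist v y := dist_triangle4 x u v y
    linarith
  have h4 : dist2 A B ≤ dist x y := dist2_le_dist hx hy
  have h5 : dist2 A B ≤ (1 / ε) * (s * (2 * ℓ)) + 4 * s * ℓ := by linarith
  have h6 : dist2 A B ≤ (1 / ε) * (6 * s * ℓ) := by
    have hε' : (1:ℝ) ≤ 1 / ε := by
      rw [le_div_iff₀ hε]; linarith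
    have : 4 * s * ℓ ≤ (1 / ε) * (4 * s * ℓ) := by nlinarith [mul_pos hs2 hℓ]
    calc dist2 A B ≤ (1 / ε) * (s * (2 * ℓ)) + (1 / ε) * (4 * s * ℓ) := by linarith
      _ = (1 / ε) * (6 * s * ℓ) := by ring
  have h6' : ε * dist2 A B ≤ 6 * s * ℓ := by
    calc ε * dist2 A B ≤ ε * ((1 / ε) * (6 * s * ℓ)) := mul_le_mul_of_nonneg_left h6 hε.le
      _ = 6 * s * ℓ := by field_simp
  constructor
  · rw [one_div, inv_mul_eq_div, div_mul_eq_mul_div, div_le_iff₀ (by positivity)]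
    linarith
  · rw [one_div, inv_mul_eq_div, div_mul_eq_mul_div, le_div_iff₀ hs2]
    linarith
end
end
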